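/- arXiv:1703.06866 — 9 statements merged into one kernel-verified Lean document; each statement's English description precedes it below -/
import Mathlib

section
/- If there exists a point M in the plane of an equilateral triangle with side length θ > 0 such that the distances from M to all three vertices are rational, then θ² = α ± √β for some rationals α, β with β ≥ 0 and α > 0; in particular θ is a root of a polynomial x⁴ + ux² + v with rational coefficients. -/
noncomputable section

abbrev Pt := EuclideanSpace ℝ (Fin 2)

def IsRat (x : ℝ) : Prop := ∃ q : ℚ, (q : ℝ) = x

/-- `θ` is "good": some point of the plane is at rational distance from all
vertices of an equilateral triangle of side length `θ`. -/
def Good (θ : ℝ) : Prop :=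
  ∃ A B C M : Pt, dist A B = θ ∧ dist B C = θ ∧ dist C A = θ ∧
    IsRat (dist M A) ∧ IsRat (dist M B) ∧ IsRat (dist M C)

lemma dist_sq' (x y : Pt) : dist x y ^ 2 = (x 0 - y 0) ^ 2 + (x 1 - y 1) ^ 2 := by
  rw [EuclideanSpace.dist_eq, Real.sq_sqrt (by positivity)]
  simp [Fin.sum_univ_two, Real.dist_eq, sq_abs]

lemma key (x1 y1 x2 y2 x3 y3 t a b c : ℝ) (ht : t ≠ 0)
    (ha : x1 ^ 2 + y1 ^ 2 = a ^ 2) (hb : x2 ^ 2 + y2 ^ 2 = b ^ 2)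
    (hc : x3 ^ 2 + y3 ^ 2 = c ^ 2)
    (h1 : (x1 - x2) ^ 2 + (y1 - y2) ^ 2 = t ^ 2)
    (h2 : (x2 - x3) ^ 2 + (y2 - y3) ^ 2 = t ^ 2)
    (h3 : (x1 - x3) ^ 2 + (y1 - y3) ^ 2 = t ^ 2) :
    2 * t ^ 4 - 2 * (a ^ 2 + b ^ 2 + c ^ 2) * t ^ 2
      + 3 * (a ^ 4 + b ^ 4 + c ^ 4) - (a ^ 2 + b ^ 2 + c ^ 2) ^ 2 = 0 := by
  have gram : (x1 ^ 2 + y1 ^ 2) * (x2 ^ 2 + y2 ^ 2) * (x3 ^ 2 + y3 ^ 2)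
      + 2 * (x1 * x2 + y1 * y2) * (x2 * x3 + y2 * y3) * (x1 * x3 + y1 * y3)
      - (x1 ^ 2 + y1 ^ 2) * (x2 * x3 + y2 * y3) ^ 2
      - (x2 ^ 2 + y2 ^ 2) * (x1 * x3 + y1 * y3) ^ 2
      - (x3 ^ 2 + y3 ^ 2) * (x1 * x2 + y1 * y2) ^ 2 = 0 := by ring
  have hp : x1 * x2 + y1 * y2 = (a ^ 2 + b ^ 2 - t ^ 2) / 2 := by
    linear_combination (ha + hb - h1) / 2
  have hq : x2 * x3 + y2 * y3 = (b ^ 2 + c ^ 2 - t ^ 2) / 2 := by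
    linear_combination (hb + hc - h2) / 2
  have hr : x1 * x3 + y1 * y3 = (a ^ 2 + c ^ 2 - t ^ 2) / 2 := by
    linear_combination (ha + hc - h3) / 2
  rw [ha, hb, hc, hp, hq, hr] at gram
  have key2 : t ^ 2 * (2 * t ^ 4 - 2 * (a ^ 2 + b ^ 2 + c ^ 2) * t ^ 2
      + 3 * (a ^ 4 + b ^ 4 + c ^ 4) - (a ^ 2 + b ^ 2 + c ^ 2) ^ 2) = 0 := by
    linear_combination (-8 : ℝ) * gram
  rcases mul_eq_zero.mp key2 with h | h
  · exact absurd (pow_eq_zero_iff (n := 2) (by norm_num) |>.mp h) ht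
  · exact h

theorem stmt_0 (θ : ℝ) (hθ : 0 < θ) (h : Good θ) :
    (∃ α β : ℚ, 0 ≤ β ∧ 0 < α ∧
      (θ ^ 2 = α + Real.sqrt β ∨ θ ^ 2 = α - Real.sqrt β)) ∧
    ∃ u v : ℚ, θ ^ 4 + (u : ℝ) * θ ^ 2 + (v : ℝ) = 0 := by
  obtain ⟨A, B, C, M, hAB, hBC, hCA, ⟨a, hA⟩, ⟨b, hB⟩, ⟨c, hC⟩⟩ := h
  have ha : (A 0 - M 0) ^ 2 + (A 1 - M 1) ^ 2 = (a : ℝ) ^ 2 := by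
    have h' := dist_sq' M A; rw [← hA] at h'; linear_combination -h'
  have hb : (B 0 - M 0) ^ 2 + (B 1 - M 1) ^ 2 = (b : ℝ) ^ 2 := by
    have h' := dist_sq' M B; rw [← hB] at h'; linear_combination -h'
  have hc : (C 0 - M 0) ^ 2 + (C 1 - M 1) ^ 2 = (c : ℝ) ^ 2 := by
    have h' := dist_sq' M C; rw [← hC] at h'; linear_combination -h'
  have h1 : ((A 0 - M 0) - (B 0 - M 0)) ^ 2 + ((A 1 - M 1) - (B 1 - M 1)) ^ 2 = θ ^ 2 := by
    have h' := dist_sq' A B; rw [hAB] at h'; linear_combination -h'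
  have h2 : ((B 0 - M 0) - (C 0 - M 0)) ^ 2 + ((B 1 - M 1) - (C 1 - M 1)) ^ 2 = θ ^ 2 := by
    have h' := dist_sq' B C; rw [hBC] at h'; linear_combination -h'
  have h3 : ((A 0 - M 0) - (C 0 - M 0)) ^ 2 + ((A 1 - M 1) - (C 1 - M 1)) ^ 2 = θ ^ 2 := by
    have h' := dist_sq' C A; rw [hCA] at h'; linear_combination -h'
  have E := key (A 0 - M 0) (A 1 - M 1) (B 0 - M 0) (B 1 - M 1) (C 0 - M 0) (C 1 - M 1)
    θ (a : ℝ) (b : ℝ) (c : ℝ) (ne_of_gt hθ) ha hb hc h1 h2 h3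
  set s : ℚ := a ^ 2 + b ^ 2 + c ^ 2 with hs
  set qq : ℚ := a ^ 4 + b ^ 4 + c ^ 4 with hqq
  set v : ℚ := (3 * qq - s ^ 2) / 2 with hv
  have E' : θ ^ 4 + (-s : ℝ) * θ ^ 2 + (v : ℝ) = 0 := by
    rw [hv, hs, hqq]; push_cast; linarith [E]
  refine ⟨?_, ⟨-s, v, by exact_mod_cast E'⟩⟩
  -- positivity of s
  have haR : (0 : ℝ) ≤ (a : ℝ) := hA ▸ dist_nonneg
  have hbR : (0 : ℝ) ≤ (b : ℝ) := hB ▸ dist_nonneg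
  have hsnn : 0 ≤ s := by positivity
  have hspos : 0 < s := by
    rcases hsnn.lt_or_eq with h' | h'
    · exact h'
    · exfalso
      have ha0 : a = 0 := by nlinarith [sq_nonneg a, sq_nonneg b, sq_nonneg c]
      have hb0 : b = 0 := by nlinarith [sq_nonneg a, sq_nonneg b, sq_nonneg c]
      have hMA : M = A := by
        have : dist M A = 0 := by rw [← hA, ha0]; norm_num
        exact dist_eq_zero.mp this
      have hMB : M = B := by
        have : dist M B = 0 := by rw [← hB, hb0]; norm_num
        exact dist_eq_zero.mp this
      have : dist A B = 0 := by rw [← hMA, ← hMB, dist_self]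
      rw [hAB] at this; linarith
  set α : ℚ := s / 2 with hα
  set β : ℚ := s ^ 2 / 4 - v with hβ
  have hβR : (β : ℝ) = (θ ^ 2 - (α : ℝ)) ^ 2 := by
    rw [hβ, hα]; push_cast; linear_combination -E'
  refine ⟨α, β, ?_, ?_, ?_⟩
  · have : (0 : ℝ) ≤ (β : ℝ) := hβR ▸ sq_nonneg _
    exact_mod_cast this
  · rw [hα]; positivity
  · have hsqrt : Real.sqrt β = |θ ^ 2 - (α : ℝ)| := by
      rw [hβR, Real.sqrt_sq_eq_abs]
    rcases abs_cases (θ ^ 2 - (α : ℝ)) with ⟨he, _⟩ | ⟨he, _⟩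
    · left; rw [hsqrt, he]; ring
    · right; rw [hsqrt, he]; ring
end
end

section
/- For any point M in the plane of an equilateral triangle ABC with side length θ, if a = MA, b = MB, c = MC, then 3(a⁴ + b⁴ + c⁴ + θ⁴) = (a² + b² + c² + θ²)². -/
noncomputable section

lemma dist_sq_coords (X Y : Pt) :
    dist X Y ^ 2 = (X 0 - Y 0) ^ 2 + (X 1 - Y 1) ^ 2 := by
  rw [EuclideanSpace.dist_eq, Real.sq_sqrt (by positivity)]
  simp [Fin.sum_univ_two, Real.dist_eq, sq_abs]

theorem stmt_1 (θ : ℝ) (hθ : 0 < θ) (A B C M : Pt)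
    (hAB : dist A B = θ) (hBC : dist B C = θ) (hCA : dist C A = θ) :
    3 * ((dist M A) ^ 4 + (dist M B) ^ 4 + (dist M C) ^ 4 + θ ^ 4) =
      ((dist M A) ^ 2 + (dist M B) ^ 2 + (dist M C) ^ 2 + θ ^ 2) ^ 2 := by
  have ha := dist_sq_coords M A
  have hb := dist_sq_coords M B
  have hc := dist_sq_coords M C
  have hAB2 : (A 0 - B 0) ^ 2 + (A 1 - B 1) ^ 2 = θ ^ 2 := by
    rw [← dist_sq_coords A B, hAB]
  have hBC2 : (B 0 - C 0) ^ 2 + (B 1 - C 1) ^ 2 = θ ^ 2 := by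
    rw [← dist_sq_coords B C, hBC]
  have hCA2 : (C 0 - A 0) ^ 2 + (C 1 - A 1) ^ 2 = θ ^ 2 := by
    rw [← dist_sq_coords C A, hCA]
  have key : θ ^ 2 * (3 * ((dist M A) ^ 4 + (dist M B) ^ 4 + (dist M C) ^ 4 + θ ^ 4)) =
      θ ^ 2 * (((dist M A) ^ 2 + (dist M B) ^ 2 + (dist M C) ^ 2 + θ ^ 2) ^ 2) := by
    linear_combination (θ^2*(3*(dist M A^2 + (((M 0) - (A 0))^2 + ((M 1) - (A 1))^2)) - (dist M A^2 + (((M 0) - (A 0))^2 + ((M 1) - (A 1))^2) + 2*dist M B^2 + 2*dist M C^2 + 2*θ^2))) * ha + (θ^2*(3*(dist M B^2 + (((M 0) - (B 0))^2 + ((M 1) - (B 1))^2)) - (2*(((M 0) - (A 0))^2 + ((M 1) - (A 1))^2) + dist M B^2 + (((M 0) - (B 0))^2 + ((M 1) - (B 1))^2) + 2*dist M C^2 + 2*θ^2))) * hb + (θ^2*(3*(dist M C^2 + (((M 0) - (C 0))^2 + ((M 1) - (C 1))^2)) - (2*(((M 0) - (A 0))^2 + ((M 1) - (A 1))^2) +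 2*(((M 0) - (B 0))^2 + ((M 1) - (B 1))^2) + dist M C^2 + (((M 0) - (C 0))^2 + ((M 1) - (C 1))^2) + 2*θ^2))) * hc + (-4*(2*(((B 0) - (M 0))*((C 0) - (M 0)) + ((B 1) - (M 1))*((C 1) - (M 1)))*(((C 0) - (M 0))*((A 0) - (M 0)) + ((C 1) - (M 1))*((A 1) - (M 1))) + 2*((((B 0) - (C 0))^2 + ((B 1) - (C 1))^2 - θ^2)/2)*(((C 0) - (M 0))*((A 0) - (M 0)) + ((C 1) - (M 1))*((A 1) - (M 1))) + 2*(((B 0) - (M 0))*((C 0) - (M 0)) + ((B 1) - (M 1))*((C 1) - (M 1)))*((((C 0) - (A 0))^2 + ((C 1) - (A 1))^2 - θ^2)/2) + 2*((((B 0) - (C 0))^2 + ((B 1) - (C 1))^2 - θ^2)/2)*((((C 0) - (A 0))^2 + ((C 1) - (A 1))^2 - θ^2)/2) - (((M 0) - (C 0))^2 + ((M 1) - (C 1))^2)*(2*(((A 0) - (M 0))*((B 0) - (M 0)) + ((A 1) - (M 1))*((B 1) - (M 1))) + ((((A 0) - (B 0))^2 + ((A 1) - (B 1))^2 - θ^2)/2))))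 * hAB2 + (-4*(2*(((A 0) - (M 0))*((B 0) - (M 0)) + ((A 1) - (M 1))*((B 1) - (M 1)))*(((C 0) - (M 0))*((A 0) - (M 0)) + ((C 1) - (M 1))*((A 1) - (M 1))) + 2*(((A 0) - (M 0))*((B 0) - (M 0)) + ((A 1) - (M 1))*((B 1) - (M 1)))*((((C 0) - (A 0))^2 + ((C 1) - (A 1))^2 - θ^2)/2) - (((M 0) - (A 0))^2 + ((M 1) - (A 1))^2)*(2*(((B 0) - (M 0))*((C 0) - (M 0)) + ((B 1) - (M 1))*((C 1) - (M 1))) + ((((B 0) - (C 0))^2 + ((B 1) - (C 1))^2 - θ^2)/2)))) * hBC2 + (-4*(2*(((A 0) - (M 0))*((B 0) - (M 0)) + ((A 1) - (M 1))*((B 1) - (M 1)))*(((B 0) - (M 0))*((C 0) - (M 0)) + ((B 1) - (M 1))*((C 1) - (M 1))) - (((M 0) - (B 0))^2 + ((M 1) - (B 1))^2)*(2*(((C 0) - (M 0))*((A 0) - (M 0)) + ((C 1) - (M 1))*((A 1) - (M 1))) + ((((C 0) - (A 0))^2 + ((C 1) - (A 1))^2 - θ^2)/2)))) * hCA2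
  exact mul_left_cancel₀ (pow_ne_zero 2 hθ.ne') key
end
end

section
/- Let θ be a positive real with θ ∉ ℚ and θ² ∈ ℚ. Then there exists a point at rational distance from all vertices of the equilateral triangle of side θ if and only if θ = λ√(p₁⋯p_r) for some positive rational λ, r ≥ 1, and distinct odd primes p₁,…,p_r each of which is either 3 or congruent to 1 mod 6. -/
set_option maxHeartbeats 1000000


noncomputable section

lemma exists_sqrt_neg3 (p : ℕ) [Fact p.Prime] (h3 : p % 3 = 1) : ∃ t : ZMod p, t^2 = -3 := by
  have hp := (Fact.out : p.Prime)
  have hcard : Fintype.card (ZMod p)ˣ = p - 1 := ZMod.card_units p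
  have hdvd : 3 ∣ Fintype.card (ZMod p)ˣ := by
    rw [hcard]; omega
  obtain ⟨u, hu⟩ := exists_prime_orderOf_dvd_card 3 hdvd
  set x : ZMod p := (u : ZMod p) with hx
  have hx3 : x ^ 3 = 1 := by
    have : u ^ 3 = 1 := by rw [← hu]; exact pow_orderOf_eq_one u
    calc x ^ 3 = ((u ^ 3 : (ZMod p)ˣ) : ZMod p) := by push_cast [hx]; ring
    _ = 1 := by rw [this]; rfl
  have hx1 : x ≠ 1 := by
    intro h
    have : u = 1 := Units.ext (by simpa [hx] using h)
    rw [this] at hu; simp at hu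
  have hquad : x^2 + x + 1 = 0 := by
    have hfac : (x - 1) * (x^2 + x + 1) = 0 := by
      have : x^3 - 1 = 0 := by rw [hx3]; ring
      linear_combination this
    rcases mul_eq_zero.mp hfac with h | h
    · exact absurd (by linear_combination h) hx1
    · exact h
  exact ⟨2*x+1, by linear_combination 4 * hquad⟩

lemma no_sqrt_neg3 (p : ℕ) [Fact p.Prime] (h2 : p ≠ 2) (h3 : p % 3 = 2) (t : ZMod p) :
    t^2 ≠ -3 := by
  have hp := (Fact.out : p.Prime)
  intro ht
  have hp3 : p ≠ 3 := by omega
  have h2ne : (2 : ZMod p) ≠ 0 := by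
    intro h
    have hd := (ZMod.natCast_eq_zero_iff 2 p).mp (by exact_mod_cast h)
    exact h2 ((Nat.prime_dvd_prime_iff_eq hp Nat.prime_two).mp hd)
  set x : ZMod p := (t - 1) * (2 : ZMod p)⁻¹ with hx
  have h2x : 2 * x = t - 1 := by
    rw [hx]; field_simp
  have hquad : x^2 + x + 1 = 0 := by
    have h4 : (4 : ZMod p) * (x^2+x+1) = t^2 + 3 := by
      linear_combination (2*x + t + 1) * h2x
    have h4ne : (4 : ZMod p) ≠ 0 := by
      intro h; apply h2ne
      have : (2:ZMod p) * 2 = 0 := by linear_combination h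
      rcases mul_eq_zero.mp this with h|h <;> exact h
    have : (4 : ZMod p) * (x^2+x+1) = 0 := by rw [h4, ht]; ring
    rcases mul_eq_zero.mp this with h|h
    · exact absurd h h4ne
    · exact h
  have hx1 : x ≠ 1 := by
    intro h
    rw [h] at hquad
    have h3z : (3 : ZMod p) = 0 := by linear_combination hquad
    have hd := (ZMod.natCast_eq_zero_iff 3 p).mp (by exact_mod_cast h3z)
    exact hp3 ((Nat.prime_dvd_prime_iff_eq hp Nat.prime_three).mp hd)
  have hx3 : x ^ 3 = 1 := by
    have : (x - 1) * (x^2+x+1) = x^3 - 1 := by ring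
    have h0 : x^3 - 1 = 0 := by rw [← this, hquad]; ring
    linear_combination h0
  have hxu : IsUnit x := IsUnit.of_mul_eq_one (a := x) (x^2) (by linear_combination hx3)
  set u := hxu.unit with hu
  have hu3 : u ^ 3 = 1 := by
    ext; push_cast [hu]; simpa using hx3
  have hord : orderOf u = 3 := by
    have hdvd : orderOf u ∣ 3 := orderOf_dvd_of_pow_eq_one hu3
    rcases (Nat.dvd_prime Nat.prime_three).mp hdvd with h|h
    · exfalso
      have : u = 1 := orderOf_eq_one_iff.mp h
      apply hx1
      have := congrArg (Units.val) this
      simpa [hu] using this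
    · exact h
  have hcd : 3 ∣ p - 1 := by
    have := orderOf_dvd_card (x := u)
    rwa [hord, ZMod.card_units p] at this
  omega



lemma mod4_check : ∀ xx yy jj : ZMod 4, xx^2 + 3*yy^2 ≠ 2*(2*jj+1) := by decide

set_option maxHeartbeats 1000000 in
lemma thue (p : ℕ) (hp : p.Prime) (h : p % 6 = 1) : ∃ a b : ℤ, (p:ℤ) = a^2 + 3*b^2 := by
  haveI : Fact p.Prime := ⟨hp⟩
  obtain ⟨t, ht⟩ := exists_sqrt_neg3 p (by omega)
  set m := Nat.sqrt p with hm
  have hcard : (Finset.univ : Finset (ZMod p)).card < ((Finset.range (m+1)) ×ˢ (Finset.range (m+1))).card := by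
    rw [Finset.card_product, Finset.card_range, Finset.card_univ, ZMod.card]
    have := Nat.lt_succ_sqrt p
    simpa [hm, Nat.succ_eq_add_one] using this
  obtain ⟨⟨x1, y1⟩, hx1, ⟨x2, y2⟩, hx2, hne, heq⟩ :=
    Finset.exists_ne_map_eq_of_card_lt_of_maps_to hcard
      (f := fun z : ℕ × ℕ => (z.1 : ZMod p) - t * (z.2 : ZMod p))
      (fun a _ => Finset.mem_univ _)
  simp only [Finset.mem_product, Finset.mem_range] at hx1 hx2
  set X : ℤ := (x1 : ℤ) - x2 with hX
  set Y : ℤ := (y1 : ℤ) - y2 with hY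
  have hor : X ≠ 0 ∨ Y ≠ 0 := by
    by_contra hc
    push_neg at hc
    apply hne
    have e1 : x1 = x2 := by have := hc.1; rw [hX, sub_eq_zero] at this; exact_mod_cast this
    have e2 : y1 = y2 := by have := hc.2; rw [hY, sub_eq_zero] at this; exact_mod_cast this
    rw [e1, e2]
  have hmod : ((X^2 + 3*Y^2 : ℤ) : ZMod p) = 0 := by
    have hXZ : ((X : ℤ) : ZMod p) = t * ((Y:ℤ) : ZMod p) := by
      push_cast [hX, hY]
      linear_combination heq
    push_cast
    rw [hXZ]
    linear_combination ((Y:ZMod p))^2 * ht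
  have hdvd : (p:ℤ) ∣ X^2 + 3*Y^2 := (ZMod.intCast_zmod_eq_zero_iff_dvd _ p).mp hmod
  have hmlt : (m:ℤ)^2 < p := by
    have h1 : m^2 ≤ p := Nat.sqrt_le' p
    have h2 : m^2 ≠ p := by
      intro hsq
      have : m ∣ p := ⟨m, by rw [← hsq]; ring⟩
      rcases (Nat.Prime.eq_one_or_self_of_dvd hp m this) with h'|h'
      · exfalso; rw [h'] at hsq; have h2p := hp.two_le; simp at hsq; omega
      · rw [h'] at hsq; nlinarith [hp.two_le]
    have : m^2 < p := lt_of_le_of_ne h1 h2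
    exact_mod_cast this
  have hXb : X^2 ≤ (m:ℤ)^2 := by
    have hab : |X| ≤ m := by rw [hX, abs_le]; constructor <;> push_cast <;> omega
    calc X^2 = |X|^2 := (sq_abs X).symm
    _ ≤ (m:ℤ)^2 := by nlinarith [abs_nonneg X]
  have hYb : Y^2 ≤ (m:ℤ)^2 := by
    have hab : |Y| ≤ m := by rw [hY, abs_le]; constructor <;> push_cast <;> omega
    calc Y^2 = |Y|^2 := (sq_abs Y).symm
    _ ≤ (m:ℤ)^2 := by nlinarith [abs_nonneg Y]
  have hpos : 0 < X^2 + 3*Y^2 := by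
    rcases hor with h'|h'
    · have := abs_pos.mpr h'
      nlinarith [sq_abs X, sq_nonneg Y]
    · have := abs_pos.mpr h'
      nlinarith [sq_abs Y, sq_nonneg X]
  have hub : X^2 + 3*Y^2 < 4*p := by nlinarith
  obtain ⟨k, hk⟩ := hdvd
  have hppos : (0:ℤ) < p := by exact_mod_cast hp.pos
  have hk0 : 0 < k := by
    have hmp : (0:ℤ) < (p:ℤ)*k := by rw [← hk]; exact hpos
    rcases mul_pos_iff.mp hmp with ⟨_, h'⟩ | ⟨h', _⟩
    · exact h'
    · linarith
  have hk4 : k < 4 := by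
    have : (p:ℤ) * k < (p:ℤ) * 4 := by rw [← hk]; nlinarith
    exact lt_of_mul_lt_mul_left this (le_of_lt hppos)
  interval_cases k
  · exact ⟨X, Y, by linarith [hk]⟩
  · exfalso
    obtain ⟨j, hj⟩ : ∃ j : ℕ, p = 2*j+1 := ⟨p/2, by omega⟩
    have h4 : ((X : ZMod 4))^2 + 3*((Y : ZMod 4))^2 = 2*(2*((j:ℕ) : ZMod 4)+1) := by
      have : ((X^2 + 3*Y^2 : ℤ) : ZMod 4) = ((p * 2 : ℤ) : ZMod 4) := by rw [hk]
      rw [hj] at this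
      push_cast at this ⊢
      linear_combination this
    exact mod4_check _ _ _ h4
  · have h3X : (3:ℤ) ∣ X := by
      have h3d : (3:ℤ) ∣ X^2 := ⟨p - Y^2, by linarith [hk]⟩
      exact Int.prime_three.dvd_of_dvd_pow h3d
    obtain ⟨X', hX'⟩ := h3X
    refine ⟨Y, X', ?_⟩
    have : 3*(X'^2*3 + Y^2) = 3*p := by
      have := hk
      rw [hX'] at this
      linarith
    have h9 : X'^2*3 + Y^2 = p := by linarith
    linarith


lemma prod_rep (s : Finset ℕ) (h : ∀ p ∈ s, ∃ a b : ℤ, (p:ℤ) = a^2 + 3*b^2) :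
    ∃ a b : ℤ, ((∏ p ∈ s, p : ℕ) : ℤ) = a^2 + 3*b^2 := by
  classical
  induction s using Finset.induction_on with
  | empty => exact ⟨1, 0, by simp⟩
  | insert _ _ hx ih =>
    rename_i p s'
    obtain ⟨a, b, hab⟩ := h p (Finset.mem_insert_self p s')
    obtain ⟨c, d, hcd⟩ := ih (fun q hq => h q (Finset.mem_insert_of_mem hq))
    refine ⟨a*c - 3*b*d, a*d + b*c, ?_⟩
    rw [Finset.prod_insert hx, Nat.cast_mul, hab, hcd]
    ring

lemma mod8_check1 : ∀ m z u v : ZMod 8, 2*(2*m+1)*z^2 ≠ (2*u+1)^2+3*(2*v+1)^2 := by decide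
lemma mod2_check1 : ∀ m z u v : ZMod 2, 2*(2*m+1)*z^2 ≠ (2*u+1)^2+3*(2*v)^2 := by decide
lemma mod2_check2 : ∀ m z u v : ZMod 2, 2*(2*m+1)*z^2 ≠ (2*u)^2+3*(2*v+1)^2 := by decide

lemma descent (p : ℕ) (hp : p.Prime) (hbad : p = 2 ∨ p % 3 = 2) (n : ℤ)
    (hpn : (p:ℤ) ∣ n) (hp2n : ¬((p:ℤ)*(p:ℤ) ∣ n)) :
    ∀ Z U V : ℤ, n * Z^2 = U^2 + 3*V^2 → Z = 0 := by
  haveI : Fact p.Prime := ⟨hp⟩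
  have hpZ : Prime (p:ℤ) := Nat.prime_iff_prime_int.mp hp
  suffices H : ∀ k : ℕ, ∀ Z U V : ℤ, Z.natAbs = k → n * Z^2 = U^2 + 3*V^2 → Z = 0 by
    intro Z U V h
    exact H Z.natAbs Z U V rfl h
  intro k
  induction k using Nat.strong_induction_on with
  | _ k ih =>
    intro Z U V hk heq
    by_contra hZ
    obtain ⟨n', hn'⟩ := hpn
    by_cases hp2 : p = 2
    · -- p = 2
      subst hp2
      have hodd : ¬ ((2:ℤ) ∣ n') := by
        intro ⟨m, hm⟩
        exact hp2n ⟨m, by rw [hn', hm]; push_cast; ring⟩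
      obtain ⟨m, hm⟩ : ∃ m, n' = 2*m + 1 := by
        rcases Int.even_or_odd n' with ⟨m, hm⟩ | ⟨m, hm⟩
        · exact absurd ⟨m, by omega⟩ hodd
        · exact ⟨m, hm⟩
      rcases Int.even_or_odd U with ⟨u, hu⟩ | ⟨u, hu⟩ <;>
        rcases Int.even_or_odd V with ⟨v, hv⟩ | ⟨v, hv⟩
      · -- both even : descend
        have h2 : n' * Z^2 = 2*(u^2 + 3*v^2) := by
          have : (2:ℤ) * (n' * Z^2) = 2*(2*(u^2+3*v^2)) := by
            rw [hn', hu, hv] at heq; push_cast at heq ⊢; linarith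
          linarith
        have hdZ : (2:ℤ) ∣ Z := by
          have h2d : (2:ℤ) ∣ n' * Z^2 := ⟨u^2+3*v^2, h2⟩
          rcases Int.prime_two.dvd_mul.mp h2d with h'|h'
          · exact absurd h' hodd
          · exact Int.prime_two.dvd_of_dvd_pow h'
        obtain ⟨z, hz⟩ := hdZ
        have hznz : z ≠ 0 := by rintro rfl; simp at hz; exact hZ hz
        have hfin : n * z^2 = u^2 + 3*v^2 := by
          have : (2:ℤ) * (n * z^2) = 2 * (u^2+3*v^2) := by
            rw [hn'] at heq ⊢
            rw [hz, hu, hv] at heq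
            linarith
          linarith
        have hlt : z.natAbs < k := by
          rw [← hk, hz, Int.natAbs_mul]
          have h1 : z.natAbs ≠ 0 := Int.natAbs_ne_zero.mpr hznz
          norm_num
          omega
        exact hznz (ih z.natAbs hlt z u v rfl hfin)
      · -- U even V odd : impossible mod 2
        exfalso
        have : ((2:ℤ) : ZMod 2) * (2*(m:ZMod 2)+1) * ((Z:ZMod 2))^2
            = (2*(u:ZMod 2))^2 + 3*(2*(v:ZMod 2)+1)^2 := by
          have := congrArg (fun x : ℤ => (x : ZMod 2)) heq
          rw [hn', hm, hu, hv] at this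
          push_cast at this
          push_cast
          linear_combination this
        exact mod2_check2 m Z u v (by push_cast at this ⊢; linear_combination this)
      · exfalso
        have : ((2:ℤ) : ZMod 2) * (2*(m:ZMod 2)+1) * ((Z:ZMod 2))^2
            = (2*(u:ZMod 2)+1)^2 + 3*(2*(v:ZMod 2))^2 := by
          have := congrArg (fun x : ℤ => (x : ZMod 2)) heq
          rw [hn', hm, hu, hv] at this
          push_cast at this
          push_cast
          linear_combination this
        exact mod2_check1 m Z u v (by push_cast at this ⊢; linear_combination this)
      · -- both odd : impossible mod 8
        exfalso
        have h8 : (2 : ZMod 8) * (2*(m:ZMod 8)+1) * ((Z:ZMod 8))^2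
            = (2*(u:ZMod 8)+1)^2 + 3*(2*(v:ZMod 8)+1)^2 := by
          have := congrArg (fun x : ℤ => (x : ZMod 8)) heq
          rw [hn', hm, hu, hv] at this
          push_cast at this
          push_cast
          linear_combination this
        exact mod8_check1 m Z u v h8
    · -- p odd
      have hodd3 : p % 3 = 2 := by tauto
      have hmodz : ((U:ZMod p))^2 = -3 * ((V:ZMod p))^2 := by
        have := congrArg (fun x : ℤ => (x : ZMod p)) heq
        rw [hn'] at this
        push_cast at this
        have hp0 : ((p:ℤ) : ZMod p) = 0 := by push_cast; exact ZMod.natCast_self p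
        rw [show ((p:ℕ) : ZMod p) = 0 from ZMod.natCast_self p] at this
        linear_combination -this
      have hdV : (p:ℤ) ∣ V := by
        by_contra hV
        have hVne : ((V:ℤ) : ZMod p) ≠ 0 := fun h => hV ((ZMod.intCast_zmod_eq_zero_iff_dvd V p).mp h)
        apply no_sqrt_neg3 p hp2 hodd3 ((U:ZMod p) * ((V:ZMod p))⁻¹)
        rw [mul_pow, hmodz]
        field_simp
      have hdU : (p:ℤ) ∣ U := by
        apply hpZ.dvd_of_dvd_pow (n := 2)
        have : ((U^2 : ℤ) : ZMod p) = 0 := by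
          push_cast
          rw [hmodz]
          obtain ⟨v', hv'⟩ := hdV
          rw [hv']
          push_cast
          rw [show ((p:ℕ) : ZMod p) = 0 from ZMod.natCast_self p]
          ring
        exact (ZMod.intCast_zmod_eq_zero_iff_dvd _ p).mp this
      obtain ⟨U', hU'⟩ := hdU
      obtain ⟨V', hV'⟩ := hdV
      have hpn'' : ¬ ((p:ℤ) ∣ n') := by
        intro ⟨m, hm⟩
        exact hp2n ⟨m, by rw [hn', hm]; ring⟩
      have hstep : n' * Z^2 = (p:ℤ) * (U'^2 + 3*V'^2) := by
        have hppos : (0:ℤ) < p := by exact_mod_cast hp.pos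
        have : (p:ℤ) * (n' * Z^2) = (p:ℤ) * ((p:ℤ) * (U'^2+3*V'^2)) := by
          rw [hn', hU', hV'] at heq
          ring_nf at heq ⊢
          linarith
        exact mul_left_cancel₀ (by positivity) this
      have hdZ : (p:ℤ) ∣ Z := by
        have h2d : (p:ℤ) ∣ n' * Z^2 := ⟨U'^2+3*V'^2, hstep⟩
        rcases hpZ.dvd_mul.mp h2d with h'|h'
        · exact absurd h' hpn''
        · exact hpZ.dvd_of_dvd_pow h'
      obtain ⟨z, hz⟩ := hdZ
      have hznz : z ≠ 0 := by rintro rfl; simp at hz; exact hZ hz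
      have hfin : n * z^2 = U'^2 + 3*V'^2 := by
        have hppos : (0:ℤ) < p := by exact_mod_cast hp.pos
        have : (p:ℤ) * (n * z^2) = (p:ℤ) * (U'^2+3*V'^2) := by
          rw [hn']
          rw [hz] at hstep
          ring_nf at hstep ⊢
          linarith
        exact mul_left_cancel₀ (by positivity) this
      have hlt : z.natAbs < k := by
        rw [← hk, hz, Int.natAbs_mul]
        have h1 : z.natAbs ≠ 0 := Int.natAbs_ne_zero.mpr hznz
        have hp2' : 2 ≤ p := hp.two_le
        have hpa : ((p:ℤ)).natAbs = p := Int.natAbs_natCast p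
        rw [hpa]
        calc z.natAbs < 2 * z.natAbs := by omega
        _ ≤ p * z.natAbs := Nat.mul_le_mul_right _ hp2'
      exact hznz (ih z.natAbs hlt z U' V' rfl hfin)

lemma dist_pt (x y : Pt) : dist x y = Real.sqrt ((x 0 - y 0)^2 + (x 1 - y 1)^2) := by
  rw [EuclideanSpace.dist_eq]
  congr 1
  simp [Fin.sum_univ_two, Real.dist_eq, sq_abs]

lemma good_of_rep (θ : ℝ) (hθ : 0 < θ) (G H : ℚ)
    (hrep : θ^2 = (G:ℝ)^2 + 3*(H:ℝ)^2) : Good θ := by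
  set g : ℝ := (G:ℝ)
  set h : ℝ := (H:ℝ)
  have hθ0 : θ ≠ 0 := ne_of_gt hθ
  have hs3 : Real.sqrt 3 * Real.sqrt 3 = 3 := Real.mul_self_sqrt (by norm_num)
  set s3 : ℝ := Real.sqrt 3 with hs3d
  refine ⟨!₂[0,0], !₂[θ,0], !₂[θ/2, θ*s3/2], !₂[h*(3*h-g)/θ, s3*(h*(h+g))/θ], ?_, ?_, ?_, ?_, ?_, ?_⟩
  · rw [dist_pt]
    simp only [PiLp.toLp_apply, Matrix.cons_val_zero, Matrix.cons_val_one, Matrix.head_cons]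
    rw [show (0-θ)^2 + ((0:ℝ)-0)^2 = θ^2 by ring]
    exact Real.sqrt_sq hθ.le
  · rw [dist_pt]
    simp only [PiLp.toLp_apply, Matrix.cons_val_zero, Matrix.cons_val_one, Matrix.head_cons]
    rw [show (θ-θ/2)^2 + ((0:ℝ)-θ*s3/2)^2 = θ^2 by linear_combination (θ^2/4) * hs3]
    exact Real.sqrt_sq hθ.le
  · rw [dist_pt]
    simp only [PiLp.toLp_apply, Matrix.cons_val_zero, Matrix.cons_val_one, Matrix.head_cons]
    rw [show (θ/2-0)^2 + ((θ*s3/2:ℝ)-0)^2 = θ^2 by linear_combination (θ^2/4) * hs3]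
    exact Real.sqrt_sq hθ.le
  · rw [dist_pt]
    simp only [PiLp.toLp_apply, Matrix.cons_val_zero, Matrix.cons_val_one, Matrix.head_cons]
    rw [show (h*(3*h-g)/θ-0)^2 + ((s3*(h*(h+g))/θ:ℝ)-0)^2 = ((2*h)^2 : ℝ) by
      field_simp
      linear_combination (h*(h+g))^2 * hs3 + 4*h^2 * hrep + (-8*h^2) * hrep]
    refine ⟨|2*H|, ?_⟩
    rw [Real.sqrt_sq_eq_abs]
    push_cast
    rfl
  · rw [dist_pt]
    simp only [PiLp.toLp_apply, Matrix.cons_val_zero, Matrix.cons_val_one, Matrix.head_cons]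
    rw [show (h*(3*h-g)/θ-θ)^2 + ((s3*(h*(h+g))/θ:ℝ)-0)^2 = ((g+h)^2 : ℝ) by
      field_simp
      linear_combination (h*(h+g))^2 * hs3 + ((g+h)^2 - 2*h*(3*h-g)) * hrep + (θ^2 - g^2 + h^2 - 4*g*h) * hrep]
    refine ⟨|G+H|, ?_⟩
    rw [Real.sqrt_sq_eq_abs]
    push_cast
    rfl
  · rw [dist_pt]
    simp only [PiLp.toLp_apply, Matrix.cons_val_zero, Matrix.cons_val_one, Matrix.head_cons]
    rw [show (h*(3*h-g)/θ-θ/2)^2 + ((s3*(h*(h+g))/θ:ℝ)-θ*s3/2)^2 = ((g-h)^2 : ℝ) by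
      field_simp
      linear_combination (h*(h+g))^2 * hs3 + ((g-h)^2 - h*(3*h-g) - 3*h*(h+g)) * hrep + (θ^4 - 4*h*g*θ^2 - 4*h^2*θ^2 + 3*h^2*(g+h)^2) * hs3 + (4*θ^2 - g^2 - 11*h^2 + 4*g*h) * hrep]
    refine ⟨|G-H|, ?_⟩
    rw [Real.sqrt_sq_eq_abs]
    push_cast
    rfl

lemma dist_sq_pt (x y : Pt) : (dist x y)^2 = (x 0 - y 0)^2 + (x 1 - y 1)^2 := by
  rw [dist_pt, Real.sq_sqrt (by positivity)]

lemma rep_of_good (θ : ℝ) (hθ : 0 < θ) (hirr : Irrational θ) (q : ℚ) (hq : (q:ℝ) = θ^2)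
    (hG : Good θ) : ∃ a X Y : ℚ, a ≠ 0 ∧ 3*q*a^2 = X^2 + 3*Y^2 := by
  obtain ⟨A, B, C, M, hAB, hBC, hCA, ⟨qa, hqa⟩, ⟨qb, hqb⟩, ⟨qc, hqc⟩⟩ := hG
  have hPa : (qa:ℝ)^2 = (M 0 - A 0)^2 + (M 1 - A 1)^2 := by
    rw [hqa, dist_sq_pt]
  have hPb : (qb:ℝ)^2 = ((M 0 - A 0)-(B 0 - A 0))^2 + ((M 1 - A 1)-(B 1 - A 1))^2 := by
    rw [hqb, dist_sq_pt]; ring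
  have hPc : (qc:ℝ)^2 = ((M 0 - A 0)-(C 0 - A 0))^2 + ((M 1 - A 1)-(C 1 - A 1))^2 := by
    rw [hqc, dist_sq_pt]; try ring
  have he : (q:ℝ) = (B 0 - A 0)^2 + (B 1 - A 1)^2 := by
    rw [hq, ← hAB, dist_sq_pt]; ring
  have hf : (q:ℝ) = (C 0 - A 0)^2 + (C 1 - A 1)^2 := by
    rw [hq, ← hCA, dist_sq_pt]; try ring
  have hef : (q:ℝ) = ((B 0 - A 0)-(C 0 - A 0))^2 + ((B 1 - A 1)-(C 1 - A 1))^2 := by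
    rw [hq, ← hBC, dist_sq_pt]; ring
  have hR : (B 0 - A 0)*(C 0 - A 0) + (B 1 - A 1)*(C 1 - A 1) = (q:ℝ)/2 := by linear_combination (hef - he - hf)/2
  have hqa0 : qa ≠ 0 := by
    intro h
    rw [h] at hqa
    have hMA : M = A := by
      have : dist M A = 0 := by rw [← hqa]; simp
      exact dist_eq_zero.mp this
    apply hirr
    refine ⟨qb, ?_⟩
    rw [hqb, hMA, hAB]
  obtain ⟨s, hsq'⟩ : ∃ s : ℚ, s = (qa^2 + q - qb^2)/2 := ⟨_, rfl⟩
  obtain ⟨t, htq'⟩ : ∃ t : ℚ, t = (qa^2 + q - qc^2)/2 := ⟨_, rfl⟩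
  have hs : (s:ℝ) = ((M 0 - A 0)*(B 0 - A 0) + (M 1 - A 1)*(B 1 - A 1)) := by
    push_cast [hsq']
    linear_combination (hPa + he - hPb)/2
  have ht : (t:ℝ) = ((M 0 - A 0)*(C 0 - A 0) + (M 1 - A 1)*(C 1 - A 1)) := by
    push_cast [htq']
    linear_combination (hPa + hf - hPc)/2
  have h1 : ((M 0 - A 0)*(B 0 - A 0) + (M 1 - A 1)*(B 1 - A 1))^2*(q:ℝ) - ((M 0 - A 0)*(B 0 - A 0) + (M 1 - A 1)*(B 1 - A 1))*((M 0 - A 0)*(C 0 - A 0) + (M 1 - A 1)*(C 1 - A 1))*(q:ℝ) + ((M 0 - A 0)*(C 0 - A 0) + (M 1 - A 1)*(C 1 - A 1))^2*(q:ℝ) = ((B 0 - A 0)*(C 1 - A 1) - (B 1 - A 1)*(C 0 - A 0))^2*(qa:ℝ)^2 := by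
    linear_combination ((M 0 - A 0)*(B 0 - A 0) + (M 1 - A 1)*(B 1 - A 1))^2 * hf + ((M 0 - A 0)*(C 0 - A 0) + (M 1 - A 1)*(C 1 - A 1))^2 * he + 2*((M 0 - A 0)*(B 0 - A 0) + (M 1 - A 1)*(B 1 - A 1))*((M 0 - A 0)*(C 0 - A 0) + (M 1 - A 1)*(C 1 - A 1))*hR - ((B 0 - A 0)*(C 1 - A 1) - (B 1 - A 1)*(C 0 - A 0))^2*hPa
  have h2 : (q:ℝ)*(q:ℝ) - ((q:ℝ)/2)^2 = ((B 0 - A 0)*(C 1 - A 1) - (B 1 - A 1)*(C 0 - A 0))^2 := by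
    linear_combination (q:ℝ)*hf + ((C 0 - A 0)^2+(C 1 - A 1)^2)*he + ((B 0 - A 0)*(C 0 - A 0)+(B 1 - A 1)*(C 1 - A 1) + (q:ℝ)/2)*hR
  have hqpos : (0:ℝ) < (q:ℝ) := by rw [hq]; positivity
  have h3 : (q:ℝ) * ((3*(q:ℝ)/4)*(qa:ℝ)^2 - (((M 0 - A 0)*(B 0 - A 0) + (M 1 - A 1)*(B 1 - A 1))^2 - ((M 0 - A 0)*(B 0 - A 0) + (M 1 - A 1)*(B 1 - A 1))*((M 0 - A 0)*(C 0 - A 0) + (M 1 - A 1)*(C 1 - A 1)) + ((M 0 - A 0)*(C 0 - A 0) + (M 1 - A 1)*(C 1 - A 1))^2)) = 0 := by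
    linear_combination (qa:ℝ)^2 * h2 - h1
  have hmain' : ((M 0 - A 0)*(B 0 - A 0) + (M 1 - A 1)*(B 1 - A 1))^2 - ((M 0 - A 0)*(B 0 - A 0) + (M 1 - A 1)*(B 1 - A 1))*((M 0 - A 0)*(C 0 - A 0) + (M 1 - A 1)*(C 1 - A 1)) + ((M 0 - A 0)*(C 0 - A 0) + (M 1 - A 1)*(C 1 - A 1))^2 = (3*(q:ℝ)/4)*(qa:ℝ)^2 := by
    rcases mul_eq_zero.mp h3 with h|h
    · exact absurd h (ne_of_gt hqpos)
    · linarith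
  have hfinal : (3:ℝ)*(q:ℝ)*(qa:ℝ)^2 = (2*(s:ℝ)-(t:ℝ))^2 + 3*(t:ℝ)^2 := by
    linear_combination -4*hmain' + (4*((M 0 - A 0)*(C 0 - A 0) + (M 1 - A 1)*(C 1 - A 1)) - 4*(s:ℝ) - 4*((M 0 - A 0)*(B 0 - A 0) + (M 1 - A 1)*(B 1 - A 1)))*hs + (4*(s:ℝ) - 4*(t:ℝ) - 4*((M 0 - A 0)*(C 0 - A 0) + (M 1 - A 1)*(C 1 - A 1)))*ht
  refine ⟨qa, 2*s - t, t, hqa0, ?_⟩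
  exact_mod_cast hfinal


lemma forward_nt (θ : ℝ) (hθ : 0 < θ) (hirr : Irrational θ) (q : ℚ) (hq : (q:ℝ) = θ^2)
    (a X Y : ℚ) (ha : a ≠ 0) (heq : 3*q*a^2 = X^2 + 3*Y^2)
    (descent : ∀ p : ℕ, p.Prime → (p = 2 ∨ p % 3 = 2) → ∀ n : ℤ, (p:ℤ) ∣ n → ¬((p:ℤ)*(p:ℤ) ∣ n) →
      ∀ Z U V : ℤ, n * Z^2 = U^2 + 3*V^2 → Z = 0) :
    ∃ (lam : ℚ) (s : Finset ℕ), 0 < lam ∧ s.Nonempty ∧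
      (∀ p ∈ s, Nat.Prime p ∧ Odd p ∧ (p = 3 ∨ p % 6 = 1)) ∧
      θ = (lam : ℝ) * Real.sqrt (∏ p ∈ s, (p : ℝ)) := by
  have hqpos : 0 < q := by
    have : (0:ℝ) < (q:ℝ) := by rw [hq]; positivity
    exact_mod_cast this
  -- clear denominators
  set d : ℚ := ((a.den * X.den * Y.den : ℕ) : ℚ) with hd
  have hdpos : 0 < d := by
    rw [hd]
    have := a.pos
    have := X.pos
    have := Y.pos
    push_cast
    positivity
  obtain ⟨A', hA'⟩ : ∃ A' : ℤ, (A' : ℚ) = a * d := by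
    refine ⟨a.num * (X.den * Y.den), ?_⟩
    rw [hd]
    push_cast
    rw [← Rat.mul_den_eq_num]
    ring
  obtain ⟨X', hX'⟩ : ∃ X' : ℤ, (X' : ℚ) = X * d := by
    refine ⟨X.num * (a.den * Y.den), ?_⟩
    rw [hd]
    push_cast
    rw [← Rat.mul_den_eq_num]
    ring
  obtain ⟨Y', hY'⟩ : ∃ Y' : ℤ, (Y' : ℚ) = Y * d := by
    refine ⟨Y.num * (a.den * X.den), ?_⟩
    rw [hd]
    push_cast
    rw [← Rat.mul_den_eq_num]
    ring
  have hA'0 : A' ≠ 0 := by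
    intro h
    rw [h] at hA'
    have : a * d = 0 := by exact_mod_cast hA'.symm
    rcases mul_eq_zero.mp this with h'|h'
    · exact ha h'
    · exact absurd h' (ne_of_gt hdpos)
  -- equation with integer values, rational level, after multiplying by d^2 and den^2
  have heq2 : 3*(q.num*q.den)*(A':ℚ)^2 = ((X':ℚ)*q.den)^2 + 3*((Y':ℚ)*q.den)^2 := by
    have hqd : (q:ℚ) * q.den = q.num := Rat.mul_den_eq_num q
    rw [hA', hX', hY']
    linear_combination (d^2 * (q.den:ℚ)^2) * heq - (3*(a*d)^2*(q.den:ℚ)) * hqd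
  set Nint : ℤ := q.num * q.den with hNint
  have heq3 : Nint * (3*A')^2 = (3*(Y'*q.den))^2 + 3*(X'*q.den)^2 := by
    have : (3:ℚ)*(q.num*q.den)*(A':ℚ)^2 = ((X':ℚ)*q.den)^2 + 3*((Y':ℚ)*q.den)^2 := heq2
    have hz : (Nint : ℚ) * (3*(A':ℚ))^2 = (3*((Y':ℚ)*q.den))^2 + 3*((X':ℚ)*q.den)^2 := by
      push_cast [hNint]
      push_cast at this
      linear_combination 3 * this
    exact_mod_cast hz
  have hNpos : 0 < Nint := by
    rw [hNint]
    have h1 : 0 < q.num := Rat.num_pos.mpr hqpos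
    have h2 : (0:ℤ) < q.den := by exact_mod_cast q.pos
    positivity
  set N : ℕ := Nint.toNat with hN
  have hNcast : (N:ℤ) = Nint := Int.toNat_of_nonneg hNpos.le
  obtain ⟨n, b, hbn, hsf⟩ := Nat.sq_mul_squarefree N
  have hN0 : N ≠ 0 := by
    intro h
    rw [← hNcast, h] at hNpos
    simp at hNpos
  have hb0 : b ≠ 0 := by intro h; rw [h] at hbn; simp at hbn; exact hN0 hbn.symm
  have hn0 : n ≠ 0 := by intro h; rw [h] at hbn; simp at hbn; exact hN0 hbn.symm
  -- the key equation with n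
  have hneq : (n:ℤ) * ((b:ℤ)*(3*A'))^2 = (3*(Y'*q.den))^2 + 3*(X'*q.den)^2 := by
    rw [← heq3, ← hNcast, ← hbn]
    push_cast
    ring
  -- all primes of n are good
  have hgood : ∀ p ∈ n.primeFactors, Nat.Prime p ∧ Odd p ∧ (p = 3 ∨ p % 6 = 1) := by
    intro p hp
    have hpp : p.Prime := Nat.prime_of_mem_primeFactors hp
    have hpn : p ∣ n := Nat.dvd_of_mem_primeFactors hp
    by_cases hgood : p = 3 ∨ p % 6 = 1
    · refine ⟨hpp, ?_, hgood⟩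
      rcases hgood with h|h
      · rw [h]; decide
      · have := hpp.two_le
        refine Nat.odd_iff.mpr ?_
        omega
    · exfalso
      push_neg at hgood
      have hbad : p = 2 ∨ p % 3 = 2 := by
        by_cases hp2 : p = 2
        · left; exact hp2
        · right
          have hodd : p % 2 = 1 := Nat.odd_iff.mp (hpp.odd_of_ne_two hp2)
          have h3 : ¬ (3 ∣ p) := by
            intro h
            exact hgood.1 ((Nat.prime_dvd_prime_iff_eq Nat.prime_three hpp).mp h).symm
          have : p % 3 ≠ 0 := fun h => h3 (Nat.dvd_of_mod_eq_zero h)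
          have := hgood.2
          omega
      have hd1 : (p:ℤ) ∣ (n:ℤ) := by exact_mod_cast Int.natCast_dvd_natCast.mpr hpn
      have hd2 : ¬ ((p:ℤ)*(p:ℤ) ∣ (n:ℤ)) := by
        intro h
        have : (p*p : ℕ) ∣ n := by exact_mod_cast h
        exact hpp.not_isUnit (hsf p this)
      have := descent p hpp hbad (n:ℤ) hd1 hd2 _ _ _ hneq
      have hb0' : (b:ℤ) ≠ 0 := by exact_mod_cast hb0
      rcases mul_eq_zero.mp this with h|h
      · exact hb0' h
      · have : A' = 0 := by omega
        exact hA'0 this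
  -- n > 1
  have hn1 : 1 < n := by
    rcases Nat.lt_or_ge n 2 with h|h
    · interval_cases n
      · exact absurd rfl hn0
      · exfalso
        -- N = b^2, θ rational
        apply hirr
        refine ⟨(b:ℚ)/(q.den:ℚ), ?_⟩
        have hθsq : θ^2 = ((b:ℝ)/(q.den:ℝ))^2 := by
          rw [← hq]
          rw [Rat.cast_def]
          have hNb : (N:ℝ) = (b:ℝ)^2 := by
            have : b^2 * 1 = N := hbn
            simp at this
            rw [← this]
            push_cast
            ring
          have hNval : (N:ℝ) = (q.num:ℝ) * (q.den:ℝ) := by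
            have h' : (N:ℤ) = q.num * q.den := hNcast.trans hNint
            exact_mod_cast h'
          have hden : ((q.den:ℝ)) ≠ 0 := by
            have := q.pos
            positivity
          field_simp
          nlinarith [hNb, hNval]
        have hbpos : (0:ℝ) ≤ (b:ℝ)/(q.den:ℝ) := by positivity
        have := abs_eq_abs.mpr (Or.inl hθsq)
        push_cast
        nlinarith [abs_nonneg θ, sq_abs θ, sq_abs ((b:ℝ)/(q.den:ℝ))]
    · exact h
  refine ⟨(b:ℚ)/(q.den:ℚ), n.primeFactors, by positivity, Nat.nonempty_primeFactors.mpr hn1, hgood, ?_⟩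
  -- θ = (b/den) * sqrt n
  have hprod : ∏ p ∈ n.primeFactors, (p:ℝ) = (n:ℝ) := by
    rw [← Nat.cast_prod, Nat.prod_primeFactors_of_squarefree hsf]
  rw [hprod]
  have hqval : (q:ℝ) = ((b:ℝ)/(q.den:ℝ))^2 * (n:ℝ) := by
    rw [Rat.cast_def]
    have hNval : (N:ℝ) = (q.num:ℝ) * (q.den:ℝ) := by
      have h' : (N:ℤ) = q.num * q.den := hNcast.trans hNint
      exact_mod_cast h'
    have hNbn : (N:ℝ) = (b:ℝ)^2 * n := by
      rw [← hbn]; push_cast; ring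
    have hden : ((q.den:ℝ)) ≠ 0 := by
      have := q.pos
      positivity
    field_simp
    nlinarith [hNval, hNbn]
  have hθ' : θ = Real.sqrt (q:ℝ) := by
    rw [hq, Real.sqrt_sq hθ.le]
  rw [hθ', hqval, Real.sqrt_mul (by positivity), Real.sqrt_sq (by positivity)]
  push_cast
  ring


theorem stmt_8 (θ : ℝ) (hθ : 0 < θ) (hirr : Irrational θ) (hsq : IsRat (θ ^ 2)) :
    Good θ ↔
      ∃ (lam : ℚ) (s : Finset ℕ), 0 < lam ∧ s.Nonempty ∧
        (∀ p ∈ s, Nat.Prime p ∧ Odd p ∧ (p = 3 ∨ p % 6 = 1)) ∧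
        θ = (lam : ℝ) * Real.sqrt (∏ p ∈ s, (p : ℝ)) := by
  obtain ⟨q, hq⟩ := hsq
  constructor
  · intro hG
    obtain ⟨a, X, Y, ha, heq⟩ := rep_of_good θ hθ hirr q hq hG
    exact forward_nt θ hθ hirr q hq a X Y ha heq descent
  · rintro ⟨lam, s, hlam, hsne, hall, hθeq⟩
    obtain ⟨A0, B0, hrepn⟩ := prod_rep s (fun p hp => by
      rcases (hall p hp).2.2 with h|h
      · exact ⟨0, 1, by rw [h]; norm_num⟩
      · exact thue p (hall p hp).1 h)
    have hprod : ∏ p ∈ s, (p:ℝ) = ((∏ p ∈ s, p : ℕ) : ℝ) := by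
      rw [Nat.cast_prod]
    have hrep : θ^2 = ((lam*(A0:ℚ) : ℚ):ℝ)^2 + 3*((lam*(B0:ℚ) : ℚ):ℝ)^2 := by
      rw [hθeq, mul_pow, Real.sq_sqrt (by positivity), hprod]
      have hcast : ((∏ p ∈ s, p : ℕ) : ℝ) = (A0:ℝ)^2 + 3*(B0:ℝ)^2 := by
        exact_mod_cast congrArg (fun z : ℤ => (z:ℝ)) hrepn
      rw [hcast]
      push_cast
      ring
    exact good_of_rep θ hθ _ _ hrep
end
end

section
/- Let x, y, z, t be positive reals satisfying 3(x⁴ + y⁴ + z⁴ + t⁴) = (x² + y² + z² + t²)². Then any three of x, y, z, t satisfy the triangle inequality; in particular x ≤ y + z, y ≤ z + x, and z ≤ x + y. -/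
theorem stmt_10 (x y z t : ℝ) (hx : 0 < x) (hy : 0 < y) (hz : 0 < z) (ht : 0 < t)
    (h : 3 * (x ^ 4 + y ^ 4 + z ^ 4 + t ^ 4) = (x ^ 2 + y ^ 2 + z ^ 2 + t ^ 2) ^ 2) :
    x ≤ y + z ∧ y ≤ z + x ∧ z ≤ x + y := by
  have key : 3 * ((x + y + z) * (-x + y + z) * (x - y + z) * (x + y - z)) =
      (2 * t ^ 2 - x ^ 2 - y ^ 2 - z ^ 2) ^ 2 := by linear_combination (-2 : ℝ) * h
  have key' : 0 ≤ (x + y + z) * (-x + y + z) * (x - y + z) * (x + y - z) := by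
    nlinarith [sq_nonneg (2 * t ^ 2 - x ^ 2 - y ^ 2 - z ^ 2)]
  have hP : 0 < x + y + z := by linarith
  refine ⟨?_, ?_, ?_⟩
  · by_contra hc
    push_neg at hc
    have hB : 0 < x - y + z := by linarith
    have hC : 0 < x + y - z := by linarith
    nlinarith [mul_pos (mul_pos hP hB) hC]
  · by_contra hc
    push_neg at hc
    have hA : 0 < -x + y + z := by linarith
    have hC : 0 < x + y - z := by linarith
    nlinarith [mul_pos (mul_pos hP hA) hC]
  · by_contra hc
    push_neg at hc
    have hA : 0 < -x + y + z := by linarith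
    have hB : 0 < x - y + z := by linarith
    nlinarith [mul_pos (mul_pos hP hA) hB]
end

section
/- Let x, y, z, t be positive reals satisfying 3(x⁴+y⁴+z⁴+t⁴) = (x²+y²+z²+t²)². Then (−x+y+z)(x−y+z)(x+y−z) ≥ 0. -/
theorem stmt_11 (x y z t : ℝ) (hx : 0 < x) (hy : 0 < y) (hz : 0 < z) (ht : 0 < t)
    (h : 3 * (x ^ 4 + y ^ 4 + z ^ 4 + t ^ 4) = (x ^ 2 + y ^ 2 + z ^ 2 + t ^ 2) ^ 2) :
    0 ≤ (-x + y + z) * (x - y + z) * (x + y - z) := by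
  have hs : 0 < x + y + z := by linarith
  have key : 3 * (x + y + z) * ((-x + y + z) * (x - y + z) * (x + y - z))
      = (2 * t ^ 2 - x ^ 2 - y ^ 2 - z ^ 2) ^ 2 := by nlinarith [h]
  nlinarith [sq_nonneg (2 * t ^ 2 - x ^ 2 - y ^ 2 - z ^ 2), key, mul_pos hs hs]
end

section
/- Let ABC be an equilateral triangle with side length θ > 0 and let a, b, c be positive reals with 3(a⁴ + b⁴ + c⁴ + θ⁴) = (a² + b² + c² + θ²)². Then there exists a point M in the plane of ABC with MA = a, MB = b, MC = c. -/
open scoped RealInnerProductSpace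

noncomputable section

set_option maxHeartbeats 1000000 in
theorem stmt_12 (θ a b c : ℝ) (hθ : 0 < θ) (ha : 0 < a) (hb : 0 < b) (hc : 0 < c)
    (A B C : Pt) (hAB : dist A B = θ) (hBC : dist B C = θ) (hCA : dist C A = θ)
    (h : 3 * (a ^ 4 + b ^ 4 + c ^ 4 + θ ^ 4) = (a ^ 2 + b ^ 2 + c ^ 2 + θ ^ 2) ^ 2) :
    ∃ M : Pt, dist M A = a ∧ dist M B = b ∧ dist M C = c := by
  have ht2 : (θ : ℝ) ^ 2 ≠ 0 := by positivity
  set P : Pt := B - A with hP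
  set Q : Pt := C - A with hQ
  have hPn : ‖P‖ = θ := by rw [hP, ← dist_eq_norm, dist_comm]; exact hAB
  have hQn : ‖Q‖ = θ := by rw [hQ, ← dist_eq_norm]; exact hCA
  have hPQn : ‖P - Q‖ = θ := by
    have : P - Q = B - C := by rw [hP, hQ]; abel
    rw [this, ← dist_eq_norm]; exact hBC
  have hip : (inner ℝ P Q : ℝ) = θ ^ 2 / 2 := by
    have e := @norm_sub_sq_real Pt _ _ P Q
    rw [hPn, hQn, hPQn] at e
    linarith
  set p : ℝ := (θ ^ 2 + a ^ 2 - 2 * b ^ 2 + c ^ 2) / (3 * θ ^ 2) with hp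
  set q : ℝ := (θ ^ 2 + a ^ 2 + b ^ 2 - 2 * c ^ 2) / (3 * θ ^ 2) with hq
  have norm_comb : ∀ r s : ℝ, ‖r • P + s • Q‖ ^ 2 = θ ^ 2 * (r ^ 2 + r * s + s ^ 2) := by
    intro r s
    have e := @norm_add_sq_real Pt _ _ (r • P) (s • Q)
    rw [norm_smul, norm_smul, real_inner_smul_left, real_inner_smul_right,
      hPn, hQn, hip, Real.norm_eq_abs, Real.norm_eq_abs] at e
    rw [e, mul_pow, mul_pow, sq_abs, sq_abs]; ring
  have dist_of : ∀ (z : Pt) (r s t : ℝ), 0 < t → z = r • P + s • Q →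
      θ ^ 2 * (r ^ 2 + r * s + s ^ 2) = t ^ 2 → ‖z‖ = t := by
    intro z r s t htp hz he
    have h1 : ‖z‖ ^ 2 = t ^ 2 := by rw [hz, norm_comb r s, he]
    nlinarith [norm_nonneg z]
  refine ⟨A + (p • P + q • Q), ?_, ?_, ?_⟩
  · rw [dist_eq_norm]
    refine dist_of _ p q a ha (by abel) ?_
    have key : (θ ^ 2 + a ^ 2 - 2 * b ^ 2 + c ^ 2) ^ 2
        + (θ ^ 2 + a ^ 2 - 2 * b ^ 2 + c ^ 2) * (θ ^ 2 + a ^ 2 + b ^ 2 - 2 * c ^ 2)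
        + (θ ^ 2 + a ^ 2 + b ^ 2 - 2 * c ^ 2) ^ 2 = 9 * a ^ 2 * θ ^ 2 := by
      linear_combination (3 / 2 : ℝ) * h
    have e1 : θ ^ 2 * (p ^ 2 + p * q + q ^ 2)
        = ((θ ^ 2 + a ^ 2 - 2 * b ^ 2 + c ^ 2) ^ 2
        + (θ ^ 2 + a ^ 2 - 2 * b ^ 2 + c ^ 2) * (θ ^ 2 + a ^ 2 + b ^ 2 - 2 * c ^ 2)
        + (θ ^ 2 + a ^ 2 + b ^ 2 - 2 * c ^ 2) ^ 2) / (9 * θ ^ 2) := by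
      rw [hp, hq]; field_simp; ring
    rw [e1, key]; field_simp
  · rw [dist_eq_norm]
    have hz : A + (p • P + q • Q) - B = (p - 1) • P + q • Q := by
      rw [sub_smul, one_smul, hP]; abel
    refine dist_of _ (p - 1) q b hb hz ?_
    have hpm : p - 1 = (a ^ 2 - 2 * b ^ 2 + c ^ 2 - 2 * θ ^ 2) / (3 * θ ^ 2) := by
      rw [hp]; field_simp; ring
    have key : (a ^ 2 - 2 * b ^ 2 + c ^ 2 - 2 * θ ^ 2) ^ 2
        + (a ^ 2 - 2 * b ^ 2 + c ^ 2 - 2 * θ ^ 2) * (θ ^ 2 + a ^ 2 + b ^ 2 - 2 * c ^ 2)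
        + (θ ^ 2 + a ^ 2 + b ^ 2 - 2 * c ^ 2) ^ 2 = 9 * b ^ 2 * θ ^ 2 := by
      linear_combination (3 / 2 : ℝ) * h
    have e1 : θ ^ 2 * ((p - 1) ^ 2 + (p - 1) * q + q ^ 2)
        = ((a ^ 2 - 2 * b ^ 2 + c ^ 2 - 2 * θ ^ 2) ^ 2
        + (a ^ 2 - 2 * b ^ 2 + c ^ 2 - 2 * θ ^ 2) * (θ ^ 2 + a ^ 2 + b ^ 2 - 2 * c ^ 2)
        + (θ ^ 2 + a ^ 2 + b ^ 2 - 2 * c ^ 2) ^ 2) / (9 * θ ^ 2) := by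
      rw [hpm, hq]; field_simp; ring
    rw [e1, key]; field_simp
  · rw [dist_eq_norm]
    have hz : A + (p • P + q • Q) - C = p • P + (q - 1) • Q := by
      rw [sub_smul, one_smul, hQ]; abel
    refine dist_of _ p (q - 1) c hc hz ?_
    have hqm : q - 1 = (a ^ 2 + b ^ 2 - 2 * c ^ 2 - 2 * θ ^ 2) / (3 * θ ^ 2) := by
      rw [hq]; field_simp; ring
    have key : (θ ^ 2 + a ^ 2 - 2 * b ^ 2 + c ^ 2) ^ 2
        + (θ ^ 2 + a ^ 2 - 2 * b ^ 2 + c ^ 2) * (a ^ 2 + b ^ 2 - 2 * c ^ 2 - 2 * θ ^ 2)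
        + (a ^ 2 + b ^ 2 - 2 * c ^ 2 - 2 * θ ^ 2) ^ 2 = 9 * c ^ 2 * θ ^ 2 := by
      linear_combination (3 / 2 : ℝ) * h
    have e1 : θ ^ 2 * (p ^ 2 + p * (q - 1) + (q - 1) ^ 2)
        = ((θ ^ 2 + a ^ 2 - 2 * b ^ 2 + c ^ 2) ^ 2
        + (θ ^ 2 + a ^ 2 - 2 * b ^ 2 + c ^ 2) * (a ^ 2 + b ^ 2 - 2 * c ^ 2 - 2 * θ ^ 2)
        + (a ^ 2 + b ^ 2 - 2 * c ^ 2 - 2 * θ ^ 2) ^ 2) / (9 * θ ^ 2) := by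
      rw [hp, hqm]; field_simp; ring
    rw [e1, key]; field_simp
end
end

section
/- Let a, b, c be positive integers forming a non-degenerate triangle with area Δ such that 4Δ√3 is irrational, and let θ > 0 satisfy 2θ² = (a² + b² + c²) + 4Δ√3 or 2θ² = (a² + b² + c²) − 4Δ√3. Then there exists a point in the plane of the equilateral triangle of side θ at rational (indeed integer) distance from all three vertices. -/
noncomputable section

noncomputable def mkPt (u v : ℝ) : Pt := (WithLp.equiv 2 (Fin 2 → ℝ)).symm ![u, v]

lemma dist_mkPt (x y z w : ℝ) :
    dist (mkPt x y) (mkPt z w) = Real.sqrt ((x - z) ^ 2 + (y - w) ^ 2) := by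
  rw [EuclideanSpace.dist_eq]
  simp [mkPt, Fin.sum_univ_two, Real.dist_eq, sq_abs]

theorem stmt_14 (a b c : ℕ) (ha : 0 < a) (hb : 0 < b) (hc : 0 < c)
    (htri : a < b + c ∧ b < c + a ∧ c < a + b)
    (hirr : Irrational (Real.sqrt (3 * (a + b + c) * (-(a:ℝ) + b + c) * (a - b + c) * (a + b - c))))
    (θ : ℝ) (hθ : 0 < θ)
    (hform : 2 * θ ^ 2 = ((a : ℝ) ^ 2 + b ^ 2 + c ^ 2) +
        Real.sqrt (3 * (a + b + c) * (-(a:ℝ) + b + c) * (a - b + c) * (a + b - c)) ∨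
      2 * θ ^ 2 = ((a : ℝ) ^ 2 + b ^ 2 + c ^ 2) -
        Real.sqrt (3 * (a + b + c) * (-(a:ℝ) + b + c) * (a - b + c) * (a + b - c))) :
    ∃ A B C M : Pt, dist A B = θ ∧ dist B C = θ ∧ dist C A = θ ∧
      (∃ n : ℤ, (n : ℝ) = dist M A) ∧ (∃ n : ℤ, (n : ℝ) = dist M B) ∧
      (∃ n : ℤ, (n : ℝ) = dist M C) := by
  obtain ⟨h1, h2, h3⟩ := htri
  set A' : ℝ := (a : ℝ) with hA'
  set B' : ℝ := (b : ℝ) with hB'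
  set C' : ℝ := (c : ℝ) with hC'
  have haR : 0 < A' := by positivity
  have hbR : 0 < B' := by positivity
  have hcR : 0 < C' := by positivity
  set K : ℝ := Real.sqrt (3 * (A' + B' + C') * (-A' + B' + C') * (A' - B' + C') * (A' + B' - C'))
    with hK
  have t1 : (0:ℝ) < -A' + B' + C' := by
    have : (a:ℝ) < b + c := by exact_mod_cast h1
    rw [hA', hB', hC']; linarith
  have t2 : (0:ℝ) < A' - B' + C' := by
    have : (b:ℝ) < c + a := by exact_mod_cast h2
    rw [hA', hB', hC']; linarith
  have t3 : (0:ℝ) < A' + B' - C' := by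
    have : (c:ℝ) < a + b := by exact_mod_cast h3
    rw [hA', hB', hC']; linarith
  have harg : (0:ℝ) ≤ 3 * (A' + B' + C') * (-A' + B' + C') * (A' - B' + C') * (A' + B' - C') := by
    have h0 : (0:ℝ) < 3 * (A' + B' + C') := by positivity
    have := mul_pos (mul_pos (mul_pos h0 t1) t2) t3
    linarith
  have hP : (2 * θ ^ 2 - (A' ^ 2 + B' ^ 2 + C' ^ 2)) ^ 2
      = 3 * (A' + B' + C') * (-A' + B' + C') * (A' - B' + C') * (A' + B' - C') := by
    have hK2 : K ^ 2 = 3 * (A' + B' + C') * (-A' + B' + C') * (A' - B' + C') * (A' + B' - C') :=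
      Real.sq_sqrt harg
    rcases hform with h | h
    · rw [← hK2, h]; ring
    · rw [← hK2, h]; ring
  set r : ℝ := Real.sqrt 3 with hr
  have hr2 : r ^ 2 = 3 := Real.sq_sqrt (by norm_num)
  have hrpos : 0 < r := Real.sqrt_pos.mpr (by norm_num)
  have hθne : θ ≠ 0 := ne_of_gt hθ
  have hrne : r ≠ 0 := ne_of_gt hrpos
  set x : ℝ := (θ ^ 2 + A' ^ 2 - B' ^ 2) / (2 * θ) with hx
  set y : ℝ := (θ ^ 2 + A' ^ 2 + B' ^ 2 - 2 * C' ^ 2) / (2 * r * θ) with hy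
  have e1 : (x - 0) ^ 2 + (y - 0) ^ 2 = A' ^ 2 := by
    rw [hx, hy]
    field_simp
    linear_combination hP + ((θ^2+A'^2-B'^2)^2 - 4*θ^2*A'^2) * hr2
  have e2 : (x - θ) ^ 2 + (y - 0) ^ 2 = B' ^ 2 := by
    rw [hx, hy]
    field_simp
    linear_combination hP + ((θ^2+A'^2-B'^2-2*θ^2)^2 - 4*θ^2*B'^2) * hr2
  have e3 : (x - θ / 2) ^ 2 + (y - r * θ / 2) ^ 2 = C' ^ 2 := by
    rw [hx, hy]
    field_simp
    linear_combination hP + ((A'^2-B'^2)^2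
      - 4*θ^2*C'^2 - 2*θ^2*(A'^2+B'^2-2*C'^2-2*θ^2)
      + θ^4*(r^2-3)) * hr2
  refine ⟨mkPt 0 0, mkPt θ 0, mkPt (θ/2) (r*θ/2), mkPt x y, ?_, ?_, ?_, ?_, ?_, ?_⟩
  · rw [dist_mkPt, show (0 - θ)^2 + ((0:ℝ) - 0)^2 = θ ^ 2 by ring, Real.sqrt_sq hθ.le]
  · rw [dist_mkPt, show (θ - θ/2)^2 + ((0:ℝ) - r*θ/2)^2 = (r^2 + 1) * θ^2 / 4 by ring, hr2,
      show ((3:ℝ) + 1) * θ^2 / 4 = θ ^ 2 by ring, Real.sqrt_sq hθ.le]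
  · rw [dist_mkPt, show (θ/2 - 0)^2 + (r*θ/2 - (0:ℝ))^2 = (r^2 + 1) * θ^2 / 4 by ring, hr2,
      show ((3:ℝ) + 1) * θ^2 / 4 = θ ^ 2 by ring, Real.sqrt_sq hθ.le]
  · exact ⟨(a : ℤ), by rw [dist_mkPt, e1, Real.sqrt_sq haR.le]; push_cast [hA']; rfl⟩
  · exact ⟨(b : ℤ), by rw [dist_mkPt, e2, Real.sqrt_sq hbR.le]; push_cast [hB']; rfl⟩
  · exact ⟨(c : ℤ), by rw [dist_mkPt, e3, Real.sqrt_sq hcR.le]; push_cast [hC']; rfl⟩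
end
end

section
/- There is no point in the plane of an equilateral triangle with side length √2 at rational distance from all three vertices, while such a point exists for the equilateral triangle with side length √3 and also for side length √7. -/
noncomputable section

open RealInnerProductSpace


lemma descent2 : ∀ n : ℕ, ∀ x y z : ℤ, z.natAbs ≤ n → x^2 + 3*y^2 = 2*z^2 →
    x = 0 ∧ y = 0 ∧ z = 0 := by
  intro n
  induction n using Nat.strong_induction_on with
  | _ n ih =>
  intro x y z hzn h
  rcases eq_or_ne z 0 with rfl | hz
  · constructor
    · nlinarith [sq_nonneg x, sq_nonneg y]
    · constructor
      · nlinarith [sq_nonneg x, sq_nonneg y]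
      · rfl
  · exfalso
    rcases Int.even_or_odd x with ⟨a, ha⟩ | ⟨a, ha⟩ <;>
      rcases Int.even_or_odd y with ⟨b, hb⟩ | ⟨b, hb⟩
    · -- both even
      subst ha hb
      have hz2 : z ^ 2 = 2*a^2 + 6*b^2 := by ring_nf; ring_nf at h; linarith
      rcases Int.even_or_odd z with ⟨c, hc⟩ | ⟨c, hc⟩
      · subst hc
        have h' : a^2 + 3*b^2 = 2*c^2 := by nlinarith
        have hcn : c.natAbs < n := by
          have h1 : c.natAbs < (c+c).natAbs := by
            rcases Int.natAbs_eq c with he | he <;> omega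
          omega
        obtain ⟨-, -, hc0⟩ := ih c.natAbs hcn a b c le_rfl h'
        subst hc0; simp at hz
      · subst hc
        have hodd : (2*c+1)^2 = 2*(c^2+c)*2 + 1 := by ring
        have : (2:ℤ)*(c^2+c)*2 + 1 = 2*a^2+6*b^2 := by rw [← hodd, hz2]
        omega
    · -- x even y odd
      exfalso
      subst ha hb
      have h2 : 4*a^2 + 3*(4*(b^2+b) + 1) = 2*z^2 := by ring_nf; ring_nf at h; linarith
      -- parity contradiction mod 2: LHS odd
      rcases Int.even_or_odd z with ⟨c, hc⟩ | ⟨c, hc⟩ <;> subst hc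
      · have : 4*a^2 + 3*(4*(b^2+b)+1) = 2*((c+c)^2) := by rw [← h2]
        have h3 : (c+c)^2 = 4*c^2 := by ring
        omega
      · have h3 : (2*c+1)^2 = 4*(c^2+c) + 1 := by ring
        rw [h3] at h2
        omega
    · subst ha hb
      have h2 : 4*(a^2+a) + 1 + 12*b^2 = 2*z^2 := by ring_nf; ring_nf at h; linarith
      omega
    · subst ha hb
      have h2 : 4*(a^2+a) + 1 + 3*(4*(b^2+b) + 1) = 2*z^2 := by ring_nf; ring_nf at h; linarith
      -- LHS ≡ 4 mod 8
      rcases Int.even_or_odd z with ⟨c, hc⟩ | ⟨c, hc⟩ <;> subst hc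
      · have h3 : (c+c)^2 = 4*c^2 := by ring
        have h4 : 4*(a^2+a) + 1 + 3*(4*(b^2+b)+1) = 2*((c+c)^2) := by rw [← h2]
        rw [h3] at h4
        -- 4(a²+a) + 12(b²+b) + 4 = 8c² ; a²+a, b²+b even
        obtain ⟨k, hk⟩ : Even (a*(a+1)) := Int.even_mul_succ_self a
        obtain ⟨m, hm⟩ : Even (b*(b+1)) := Int.even_mul_succ_self b
        have hk' : a^2 + a = k + k := by rw [← hk]; ring
        have hm' : b^2 + b = m + m := by rw [← hm]; ring
        rw [hk', hm'] at h4
        omega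
      · have h3 : (2*c+1)^2 = 4*(c^2+c) + 1 := by ring
        rw [h3] at h2
        omega

lemma descentZ (x y z : ℤ) (h : x^2 + 3*y^2 = 6*z^2) : x = 0 ∧ y = 0 ∧ z = 0 := by
  have h3 : (3:ℤ) ∣ x := by
    have hd : (3:ℤ) ∣ x^2 := ⟨2*z^2 - y^2, by linarith⟩
    exact Int.prime_three.dvd_of_dvd_pow hd
  obtain ⟨x', rfl⟩ := h3
  have h' : y^2 + 3*x'^2 = 2*z^2 := by nlinarith
  obtain ⟨hy, hx, hz⟩ := descent2 z.natAbs y x' z le_rfl h'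
  exact ⟨by rw [hx]; ring, hy, hz⟩

lemma ratnum (x : ℚ) : (x.num:ℚ) = x * x.den := by
  have hd : (x.den:ℚ) ≠ 0 := by exact_mod_cast x.den_nz
  exact (div_eq_iff hd).mp (Rat.num_div_den x)

lemma descentQ (x y z : ℚ) (h : x^2 + 3*y^2 = 6*z^2) : x = 0 ∧ y = 0 ∧ z = 0 := by
  have key : ((x.num * y.den * z.den : ℤ) : ℚ)^2 + 3*(((x.den:ℤ) * y.num * z.den : ℤ):ℚ)^2
      = 6*(((x.den:ℤ) * y.den * z.num : ℤ):ℚ)^2 := by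
    push_cast
    rw [ratnum x, ratnum y, ratnum z]
    linear_combination ((x.den:ℚ)*(y.den)*(z.den))^2 * h
  obtain ⟨h1, h2, h3⟩ := descentZ (x.num * y.den * z.den) ((x.den:ℤ) * y.num * z.den)
    ((x.den:ℤ) * y.den * z.num) (by exact_mod_cast key)
  have hxd : ((x.den:ℤ)) ≠ 0 := by exact_mod_cast x.den_nz
  have hyd : ((y.den:ℤ)) ≠ 0 := by exact_mod_cast y.den_nz
  have hzd : ((z.den:ℤ)) ≠ 0 := by exact_mod_cast z.den_nz
  refine ⟨Rat.num_eq_zero.mp ?_, Rat.num_eq_zero.mp ?_, Rat.num_eq_zero.mp ?_⟩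
  · rcases mul_eq_zero.mp h1 with h' | h'
    · rcases mul_eq_zero.mp h' with h'' | h''
      · exact h''
      · exact absurd h'' hyd
    · exact absurd h' hzd
  · rcases mul_eq_zero.mp h2 with h' | h'
    · rcases mul_eq_zero.mp h' with h'' | h''
      · exact absurd h'' hxd
      · exact h''
    · exact absurd h' hzd
  · rcases mul_eq_zero.mp h3 with h' | h'
    · rcases mul_eq_zero.mp h' with h'' | h''
      · exact absurd h'' hxd
      · exact absurd h'' hyd
    · exact h'

def pt (a b : ℝ) : Pt := (WithLp.equiv 2 (Fin 2 → ℝ)).symm ![a, b]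

lemma dist_pt_s16 (a b c d : ℝ) : dist (pt a b) (pt c d) = Real.sqrt ((a-c)^2 + (b-d)^2) := by
  rw [EuclideanSpace.dist_eq]
  simp [pt, Fin.sum_univ_two, Real.dist_eq, sq_abs]

lemma good3 : Good (Real.sqrt 3) := by
  have h3 : Real.sqrt 3 ^ 2 = 3 := Real.sq_sqrt (by norm_num)
  set s3 := Real.sqrt 3 with hs3
  refine ⟨pt 0 0, pt s3 0, pt (s3/2) (3/2), pt (s3/2) (1/2), ?_, ?_, ?_, ?_, ?_, ?_⟩
  · rw [dist_pt_s16, show (0-s3)^2 + ((0:ℝ)-0)^2 = 3 by linear_combination h3]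
  · rw [dist_pt_s16, show (s3-s3/2)^2 + ((0:ℝ)-3/2)^2 = 3 by linear_combination (1/4)*h3]
  · rw [dist_pt_s16, show (s3/2-0)^2 + ((3:ℝ)/2-0)^2 = 3 by linear_combination (1/4)*h3]
  · refine ⟨1, ?_⟩
    rw [dist_pt_s16, show (s3/2-0)^2 + ((1:ℝ)/2-0)^2 = 1 by linear_combination (1/4)*h3,
      Real.sqrt_one]
    norm_num
  · refine ⟨1, ?_⟩
    rw [dist_pt_s16, show (s3/2-s3)^2 + ((1:ℝ)/2-0)^2 = 1 by linear_combination (1/4)*h3,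
      Real.sqrt_one]
    norm_num
  · refine ⟨1, ?_⟩
    rw [dist_pt_s16, show (s3/2-s3/2)^2 + ((1:ℝ)/2-3/2)^2 = 1 by ring, Real.sqrt_one]
    norm_num

lemma good7 : Good (Real.sqrt 7) := by
  have h7 : Real.sqrt 7 ^ 2 = 7 := Real.sq_sqrt (by norm_num)
  have h21 : Real.sqrt 21 ^ 2 = 21 := Real.sq_sqrt (by norm_num)
  set s7 := Real.sqrt 7 with hs7
  set s21 := Real.sqrt 21 with hs21
  refine ⟨pt 0 0, pt s7 0, pt (s7/2) (s21/2), pt (s7/7) (3*s21/7), ?_, ?_, ?_, ?_, ?_, ?_⟩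
  · rw [dist_pt_s16, show (0-s7)^2 + ((0:ℝ)-0)^2 = 7 by linear_combination h7]
  · rw [dist_pt_s16, show (s7-s7/2)^2 + (0-s21/2)^2 = 7 by
      linear_combination (1/4)*h7 + (1/4)*h21]
  · rw [dist_pt_s16, show (s7/2-0)^2 + (s21/2-0)^2 = 7 by
      linear_combination (1/4)*h7 + (1/4)*h21]
  · refine ⟨2, ?_⟩
    rw [dist_pt_s16, show (s7/7-0)^2 + (3*s21/7-0)^2 = 4 by
      linear_combination (1/49)*h7 + (9/49)*h21,
      show (4:ℝ) = 2^2 by norm_num, Real.sqrt_sq (by norm_num)]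
    norm_num
  · refine ⟨3, ?_⟩
    rw [dist_pt_s16, show (s7/7-s7)^2 + (3*s21/7-0)^2 = 9 by
      linear_combination (36/49)*h7 + (9/49)*h21,
      show (9:ℝ) = 3^2 by norm_num, Real.sqrt_sq (by norm_num)]
    norm_num
  · refine ⟨1, ?_⟩
    rw [dist_pt_s16, show (s7/7-s7/2)^2 + (3*s21/7-s21/2)^2 = 1 by
      linear_combination (25/196)*h7 + (1/196)*h21, Real.sqrt_one]
    norm_num

lemma notGood : ¬ Good (Real.sqrt 2) := by
  rintro ⟨A, B, C, M, hAB, hBC, hCA, ⟨qa, ha⟩, ⟨qb, hb⟩, ⟨qc, hc⟩⟩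
  have s2 : Real.sqrt 2 ^ 2 = 2 := Real.sq_sqrt (by norm_num)
  set e₁ : Pt := B - A with he1
  set e₂ : Pt := C - A with he2
  set v : Pt := M - A with hv
  have h11 : ‖e₁‖^2 = 2 := by
    rw [he1, ← dist_eq_norm, dist_comm, hAB, s2]
  have h22 : ‖e₂‖^2 = 2 := by
    rw [he2, ← dist_eq_norm, hCA, s2]
  have hsub : e₁ - e₂ = B - C := by rw [he1, he2]; abel
  have h33 : ‖e₁ - e₂‖^2 = 2 := by rw [hsub, ← dist_eq_norm, hBC, s2]
  have hip : ⟪e₁, e₂⟫ = 1 := by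
    have := norm_sub_sq_real e₁ e₂
    rw [h11, h22, h33] at this; linarith
  have hva : ‖v‖^2 = (qa:ℝ)^2 := by rw [hv, ← dist_eq_norm, ← ha]
  have hvb : ‖v - e₁‖^2 = (qb:ℝ)^2 := by
    have : v - e₁ = M - B := by rw [hv, he1]; abel
    rw [this, ← dist_eq_norm, ← hb]
  have hvc : ‖v - e₂‖^2 = (qc:ℝ)^2 := by
    have : v - e₂ = M - C := by rw [hv, he2]; abel
    rw [this, ← dist_eq_norm, ← hc]
  set p : ℚ := (qa^2 + 2 - qb^2)/2 with hpdef
  set q : ℚ := (qa^2 + 2 - qc^2)/2 with hqdef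
  have hp : ⟪v, e₁⟫ = (p:ℝ) := by
    have := norm_sub_sq_real v e₁
    rw [h11, hva, hvb] at this
    push_cast [hpdef]; linarith
  have hq : ⟪v, e₂⟫ = (q:ℝ) := by
    have := norm_sub_sq_real v e₂
    rw [h22, hva, hvc] at this
    push_cast [hqdef]; linarith
  set α : ℝ := (2*(p:ℝ) - (q:ℝ))/3 with hαdef
  set β : ℝ := (2*(q:ℝ) - (p:ℝ))/3 with hβdef
  set w : Pt := v - α • e₁ - β • e₂ with hwdef
  have hii1 : ⟪e₁, e₁⟫ = 2 := by rw [real_inner_self_eq_norm_sq, h11]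
  have hii2 : ⟪e₂, e₂⟫ = 2 := by rw [real_inner_self_eq_norm_sq, h22]
  have hip' : ⟪e₂, e₁⟫ = 1 := by rw [real_inner_comm, hip]
  have hw1 : ⟪w, e₁⟫ = 0 := by
    rw [hwdef, inner_sub_left, inner_sub_left, real_inner_smul_left,
      real_inner_smul_left, hp, hii1, hip']
    rw [hαdef, hβdef]; ring
  have hw2 : ⟪w, e₂⟫ = 0 := by
    rw [hwdef, inner_sub_left, inner_sub_left, real_inner_smul_left,
      real_inner_smul_left, hq, hii2, hip]
    rw [hαdef, hβdef]; ring
  have hLI : LinearIndependent ℝ ![e₁, e₂] := by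
    rw [LinearIndependent.pair_iff]
    intro s t hst
    have h1 : ⟪s • e₁ + t • e₂, e₁⟫ = 0 := by rw [hst, inner_zero_left]
    have h2 : ⟪s • e₁ + t • e₂, e₂⟫ = 0 := by rw [hst, inner_zero_left]
    rw [inner_add_left, real_inner_smul_left, real_inner_smul_left, hii1, hip'] at h1
    rw [inner_add_left, real_inner_smul_left, real_inner_smul_left, hii2, hip] at h2
    constructor <;> linarith
  have hsp : Submodule.span ℝ ({e₁, e₂} : Set Pt) = ⊤ := by
    apply Submodule.eq_top_of_finrank_eq
    have hr : (Set.range ![e₁, e₂]) = {e₁, e₂} := by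
      simp [Matrix.range_cons, Matrix.range_empty]
      exact Set.pair_comm e₂ e₁
    rw [← hr, finrank_span_eq_card hLI]
    simp [finrank_euclideanSpace_fin]
  have hwmem : w ∈ Submodule.span ℝ ({e₁, e₂} : Set Pt) := by
    rw [hsp]; trivial
  obtain ⟨c, d, hcd⟩ := Submodule.mem_span_pair.mp hwmem
  have hw0 : w = 0 := by
    have hww : ⟪w, w⟫ = 0 := by
      nth_rewrite 1 [← hcd]
      rw [inner_add_left, real_inner_smul_left, real_inner_smul_left,
        real_inner_comm w e₁, real_inner_comm w e₂, hw1, hw2]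
      ring
    exact inner_self_eq_zero.mp hww
  have hveq : v = α • e₁ + β • e₂ := by
    have := hw0
    rw [hwdef, sub_sub, sub_eq_zero] at this
    exact this
  have hval : (qa:ℝ)^2 = α*(p:ℝ) + β*(q:ℝ) := by
    have h0 : (qa:ℝ)^2 = ⟪v, v⟫ := by rw [real_inner_self_eq_norm_sq, hva]
    rw [h0]
    nth_rewrite 1 [hveq]
    rw [inner_add_left, real_inner_smul_left, real_inner_smul_left,
      real_inner_comm v e₁, real_inner_comm v e₂, hp, hq]
  have hQ : 3*qa^2 = 2*(p^2 - p*q + q^2) := by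
    have : ((3*qa^2 : ℚ):ℝ) = ((2*(p^2 - p*q + q^2) : ℚ):ℝ) := by
      push_cast
      rw [hαdef, hβdef] at hval
      linarith
    exact_mod_cast this
  obtain ⟨h1, h2, h3⟩ := descentQ (2*p - q) q qa (by linear_combination -2*hQ)
  have hp0 : p = 0 := by linarith
  have hMA : M = A := by
    have hv0 : v = 0 := by
      rw [hveq, hαdef, hβdef, hp0, h2]
      push_cast
      norm_num
    rw [hv, sub_eq_zero] at hv0
    exact hv0
  apply irrational_sqrt_two
  rw [← hAB, ← hMA]
  exact ⟨qb, hb⟩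

theorem stmt_16 :
    ¬ Good (Real.sqrt 2) ∧ Good (Real.sqrt 3) ∧ Good (Real.sqrt 7) := by
  exact ⟨notGood, good3, good7⟩
end
end

section
/- Let θ > 0 satisfy 2θ² = α + √β with α, β ∈ ℚ, α, β > 0, √β irrational, and α² < β. Then there is no point in the plane of the equilateral triangle of side θ at rational distance from all three vertices. -/
noncomputable section

lemma alg (p q r t x y z : ℝ)
    (hd : p*q*r - p*y^2 - r*x^2 + 2*x*y*z - q*z^2 = 0)
    (hx : x = (p + q - t)/2) (hy : y = (q + r - t)/2) (hz : z = (p + r - t)/2) :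
    t * ((p+q+r+t)^2 - 3*(p^2+q^2+r^2+t^2)) = 0 := by
  subst hx hy hz
  linear_combination (8:ℝ) * hd

lemma key_s18 (m0 m1 a0 a1 b0 b1 c0 c1 t : ℝ) (ht : 0 < t)
    (hAB : (a0-b0)^2+(a1-b1)^2 = t)
    (hBC : (b0-c0)^2+(b1-c1)^2 = t)
    (hCA : (c0-a0)^2+(c1-a1)^2 = t) :
    (((m0-a0)^2+(m1-a1)^2) + ((m0-b0)^2+(m1-b1)^2) + ((m0-c0)^2+(m1-c1)^2) + t)^2
      = 3*(((m0-a0)^2+(m1-a1)^2)^2 + ((m0-b0)^2+(m1-b1)^2)^2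
          + ((m0-c0)^2+(m1-c1)^2)^2 + t^2) := by
  set p := (m0-a0)^2+(m1-a1)^2 with hp
  set q := (m0-b0)^2+(m1-b1)^2 with hq
  set r := (m0-c0)^2+(m1-c1)^2 with hr
  have h := alg p q r t ((m0-a0)*(m0-b0)+(m1-a1)*(m1-b1))
      ((m0-b0)*(m0-c0)+(m1-b1)*(m1-c1)) ((m0-a0)*(m0-c0)+(m1-a1)*(m1-c1))
      (by rw [hp, hq, hr]; ring)
      (by rw [hp, hq]; linear_combination (-1/2 : ℝ) * hAB)
      (by rw [hq, hr]; linear_combination (-1/2 : ℝ) * hBC)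
      (by rw [hp, hr]; linear_combination (-1/2 : ℝ) * hCA)
  have h2 : (p+q+r+t)^2 - 3*(p^2+q^2+r^2+t^2) = 0 := by
    rcases mul_eq_zero.mp h with h' | h'
    · exact absurd h' (ne_of_gt ht)
    · exact h'
  linarith

lemma dsq (X Y : Pt) : dist X Y ^ 2 = (X 0 - Y 0)^2 + (X 1 - Y 1)^2 := by
  rw [EuclideanSpace.dist_eq, Real.sq_sqrt (by positivity)]
  simp [Fin.sum_univ_two, Real.dist_eq, sq_abs]

theorem stmt_18 (θ : ℝ) (hθ : 0 < θ) (α β : ℚ) (hα : 0 < α) (hβ : 0 < β)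
    (hirr : Irrational (Real.sqrt β))
    (hform : 2 * θ ^ 2 = α + Real.sqrt β) (hlt : α ^ 2 < β) :
    ¬ Good θ := by
  rintro ⟨A, B, C, M, hAB, hBC, hCA, ⟨qa, hqa⟩, ⟨qb, hqb⟩, ⟨qc, hqc⟩⟩
  have ht : (0:ℝ) < θ ^ 2 := pow_pos hθ 2
  have h1 : (A 0 - B 0)^2 + (A 1 - B 1)^2 = θ^2 := by rw [← dsq, hAB]
  have h2 : (B 0 - C 0)^2 + (B 1 - C 1)^2 = θ^2 := by rw [← dsq, hBC]
  have h3 : (C 0 - A 0)^2 + (C 1 - A 1)^2 = θ^2 := by rw [← dsq, hCA]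
  have hident := key_s18 (M 0) (M 1) (A 0) (A 1) (B 0) (B 1) (C 0) (C 1) (θ^2) ht h1 h2 h3
  rw [← dsq M A, ← dsq M B, ← dsq M C, ← hqa, ← hqb, ← hqc] at hident
  set S : ℝ := Real.sqrt β with hS
  have hS2 : S ^ 2 = (β : ℝ) := Real.sq_sqrt (by positivity)
  set sR : ℝ := (qa:ℝ)^2 + (qb:ℝ)^2 + (qc:ℝ)^2 with hsR
  have hkey : (sR - (α:ℝ)) * S
      = 3*((qa:ℝ)^4 + (qb:ℝ)^4 + (qc:ℝ)^4) + ((α:ℝ)^2 + (β:ℝ))/2 - sR^2 - sR*(α:ℝ) := by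
    rw [hsR]
    linear_combination hident - ((qa:ℝ)^2 + (qb:ℝ)^2 + (qc:ℝ)^2 - θ^2 - ((α:ℝ)+S)/2) * hform
      + (1/2 : ℝ) * hS2
  have hlt' : ((α:ℝ))^2 < (β:ℝ) := by exact_mod_cast hlt
  by_cases hc : sR = (α:ℝ)
  · rw [hc, sub_self, zero_mul] at hkey
    nlinarith [sq_nonneg ((qa:ℝ)^2 - (qb:ℝ)^2), sq_nonneg ((qb:ℝ)^2 - (qc:ℝ)^2),
      sq_nonneg ((qa:ℝ)^2 - (qc:ℝ)^2), hsR]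
  · apply hirr
    refine ⟨(3*(qa^4 + qb^4 + qc^4) + (α^2 + β)/2 - (qa^2+qb^2+qc^2)^2
        - (qa^2+qb^2+qc^2)*α) / ((qa^2+qb^2+qc^2) - α), ?_⟩
    have hne : sR - (α:ℝ) ≠ 0 := sub_ne_zero_of_ne hc
    push_cast
    rw [div_eq_iff (by rw [hsR] at hne; exact hne)]
    rw [hsR] at hkey
    linear_combination (-1:ℝ) * hkey
end
end
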